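/- For every τ_A ∈ ℝ, the ratio of the average type to the average soft skill of admitted students satisfies (∫_{{A ≥ τ_A}} t dμ) / (∫_{{A ≥ τ_A}} s dμ) = α/(1−α); in particular this ratio is independent of the threshold τ_A (and of any university preference parameter β). -/

import Mathlib

open MeasureTheory ProbabilityTheory Real Set Filter
open scoped ENNReal NNReal

noncomputable def phi (x : ℝ) : ℝ := (Real.sqrt (2*π))⁻¹ * rexp (-x^2/2)

lemma phi_pos (x : ℝ) : 0 < phi x := by unfold phi; positivity

lemma phi_nonneg (x : ℝ) : 0 ≤ phi x := (phi_pos x).le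

lemma phi_le (x : ℝ) : |phi x| ≤ (Real.sqrt (2*π))⁻¹ := by
  rw [abs_of_nonneg (phi_nonneg x)]
  unfold phi
  have h1 : rexp (-x^2/2) ≤ 1 := by
    rw [← Real.exp_zero]
    apply Real.exp_le_exp.2
    nlinarith [sq_nonneg x]
  have h2 : (0:ℝ) ≤ (Real.sqrt (2*π))⁻¹ := by positivity
  nlinarith

lemma continuous_phi : Continuous phi := by
  unfold phi; fun_prop

lemma gaussianPDFReal_eq_phi : gaussianPDFReal 0 1 = phi := by
  ext x
  simp [gaussianPDFReal, phi]

/-- Integrals against the standard Gaussian as density integrals. -/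
lemma integral_gauss (g : ℝ → ℝ) :
    ∫ x, g x ∂(gaussianReal 0 1) = ∫ x, phi x * g x := by
  rw [gaussianReal_of_var_ne_zero 0 one_ne_zero]
  have h : gaussianPDF 0 1 = fun x => ((Real.toNNReal (phi x) : ℝ≥0) : ℝ≥0∞) := by
    ext x
    rw [gaussianPDF, gaussianPDFReal_eq_phi]
    rfl
  rw [h, integral_withDensity_eq_integral_smul (continuous_phi.measurable.real_toNNReal) g]
  congr 1
  ext x
  rw [NNReal.smul_def, Real.coe_toNNReal _ (phi_nonneg x)]
  rfl

lemma integrable_mul_exp_half : Integrable (fun x : ℝ => x * rexp (-x^2/2)) := by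
  have h := integrable_mul_exp_neg_mul_sq (b := (1/2 : ℝ)) (by norm_num)
  convert h using 2 with x
  ring_nf

/-- Stein-type identity. -/
lemma stein (c : ℝ) : ∫ x in Ici c, phi x * x = phi c := by
  have h : ∀ x : ℝ, phi x * x = (Real.sqrt (2*π))⁻¹ * (x * rexp (-x^2/2)) := by
    intro x; unfold phi; ring
  simp_rw [h]
  rw [integral_const_mul, MeasureTheory.integral_Ici_eq_integral_Ioi]
  have key : ∫ x in Ioi c, x * rexp (-x^2/2) = rexp (-c^2/2) := by
    have hderiv : ∀ x ∈ Ici c, HasDerivAt (fun y : ℝ => -rexp (-y^2/2)) (x * rexp (-x^2/2)) x := by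
      intro x _
      have h1 : HasDerivAt (fun y : ℝ => -y^2/2) (-x) x := by
        have := ((hasDerivAt_pow 2 x).neg).div_const 2
        refine this.congr_deriv ?_
        push_cast
        ring
      have h2 := (h1.exp).neg
      refine h2.congr_deriv ?_
      ring
    have hint : IntegrableOn (fun x : ℝ => x * rexp (-x^2/2)) (Ioi c) :=
      integrable_mul_exp_half.integrableOn
    have htend : Tendsto (fun y : ℝ => -rexp (-y^2/2)) atTop (nhds 0) := by
      rw [show (0:ℝ) = -0 by ring]
      apply Tendsto.neg
      have h3 : Tendsto (fun y : ℝ => y^2/2) atTop atTop :=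
        (tendsto_pow_atTop (two_ne_zero)).atTop_div_const (by norm_num)
      have h4 := (Real.tendsto_exp_atBot).comp (tendsto_neg_atBot_iff.mpr h3)
      apply h4.congr
      intro y; simp [Function.comp]; ring_nf
    rw [integral_Ioi_of_hasDerivAt_of_tendsto' hderiv hint htend]
    ring
  rw [key]; unfold phi; ring_nf

/-- Gaussian convolution identity. -/
lemma conv {a : ℝ} (ha : 0 < a) (b x : ℝ) :
    ∫ u, phi u * phi ((x - b*u)/a) =
      (a / Real.sqrt (a^2+b^2)) * phi (x / Real.sqrt (a^2+b^2)) := by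
  set c : ℝ := Real.sqrt (a^2+b^2) with hc_def
  have hc : 0 < c := Real.sqrt_pos.2 (by positivity)
  have hc2 : c^2 = a^2+b^2 := Real.sq_sqrt (by positivity)
  have hsq : Real.sqrt (2*π) ≠ 0 := by positivity
  set k : ℝ := c^2/(2*a^2) with hk_def
  have hk : 0 < k := by positivity
  set m : ℝ := b*x/c^2 with hm_def
  have key : ∀ u : ℝ, phi u * phi ((x - b*u)/a) =
      ((Real.sqrt (2*π))⁻¹ * (Real.sqrt (2*π))⁻¹ * rexp (-(x/c)^2/2)) * rexp (-k * (u - m)^2) := by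
    intro u
    unfold phi
    rw [show ∀ p q r s : ℝ, (p * q) * (r * s) = (p * r) * (q * s) from fun p q r s => by ring,
      ← Real.exp_add]
    conv_rhs => rw [mul_assoc, ← Real.exp_add]
    congr 1
    have ha' : a ≠ 0 := ha.ne'
    have hc' : c ≠ 0 := hc.ne'
    have h4 : ((x - b*u)/a)^2 = (x-b*u)^2/a^2 := div_pow _ _ _
    have h5 : (x/c)^2 = x^2/c^2 := div_pow _ _ _
    rw [h4, h5, hk_def, hm_def, hc2]
    congr 1
    field_simp
    ring
  rw [integral_congr_ae (ae_of_all _ key), integral_const_mul]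
  have hshift : ∫ u : ℝ, rexp (-k * (u - m)^2) = ∫ u : ℝ, rexp (-k * u^2) :=
    integral_sub_right_eq_self (fun u => rexp (-k * u^2)) m
  rw [hshift, integral_gaussian]
  have hsqrt : Real.sqrt (π/k) = Real.sqrt (2*π) * a / c := by
    rw [show π/k = (2*π) * (a/c)^2 by rw [hk_def]; field_simp,
      Real.sqrt_mul (by positivity), Real.sqrt_sq (by positivity)]
    ring
  rw [hsqrt]
  unfold phi
  field_simp

lemma gauss_indicator (c : ℝ) :
    ∫ t, (Ici c).indicator (id : ℝ → ℝ) t ∂(gaussianReal 0 1) = phi c := by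
  rw [integral_gauss]
  have h : (fun t => phi t * (Ici c).indicator id t) = (Ici c).indicator (fun t => phi t * t) := by
    ext t
    by_cases ht : t ∈ Ici c <;> simp [Set.indicator_apply, ht]
  rw [h, integral_indicator measurableSet_Ici]
  exact stein c

lemma gauss_conv {a : ℝ} (ha : 0 < a) (b x : ℝ) :
    ∫ u, phi ((x - b*u)/a) ∂(gaussianReal 0 1) =
      (a / Real.sqrt (a^2+b^2)) * phi (x / Real.sqrt (a^2+b^2)) := by
  rw [integral_gauss]
  exact conv ha b x

lemma integrable_id_gauss : Integrable (fun x : ℝ => x) (gaussianReal 0 1) := by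
  rw [gaussianReal_of_var_ne_zero 0 one_ne_zero]
  rw [integrable_withDensity_iff (measurable_gaussianPDF 0 1)
    (ae_of_all _ fun x => ENNReal.ofReal_lt_top)]
  have h : ∀ x : ℝ, x * (gaussianPDF 0 1 x).toReal = (Real.sqrt (2*π))⁻¹ * (x * rexp (-x^2/2)) := by
    intro x
    rw [gaussianPDF, ENNReal.toReal_ofReal (gaussianPDFReal_nonneg 0 1 x), gaussianPDFReal_eq_phi]
    unfold phi; ring
  simp_rw [h]
  exact integrable_mul_exp_half.const_mul _

lemma integrable_bdd {X : Type*} [MeasurableSpace X] (μ : Measure X) [IsProbabilityMeasure μ]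
    {f : X → ℝ} (hm : AEStronglyMeasurable f μ) (M : ℝ) (h : ∀ x, |f x| ≤ M) :
    Integrable f μ :=
  Integrable.mono' (integrable_const M) hm (ae_of_all _ fun x => by simpa using h x)


open MeasureTheory ProbabilityTheory Real Set Filter

/-- Product of three standard Gaussian measures on ℝ³, coordinates (t, s, z). -/
noncomputable def mu3 : Measure (ℝ × ℝ × ℝ) :=
  (gaussianReal 0 1).prod ((gaussianReal 0 1).prod (gaussianReal 0 1))

theorem stmt11 (α σZ : ℝ) (hα : α ∈ Set.Ioo (0 : ℝ) 1) (hσZ : 0 ≤ σZ)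
    (A : ℝ × ℝ × ℝ → ℝ)
    (hA : A = fun p => α * p.1 + (1 - α) * p.2.1 + σZ * p.2.2) :
    ∀ τA : ℝ,
      (∫ p in {p : ℝ × ℝ × ℝ | τA ≤ A p}, p.1 ∂mu3) /
        (∫ p in {p : ℝ × ℝ × ℝ | τA ≤ A p}, p.2.1 ∂mu3) = α / (1 - α) := by
  intro τA
  obtain ⟨hα0, hα1⟩ := hα
  have h1α : 0 < 1 - α := by linarith
  subst hA
  set γ : Measure ℝ := gaussianReal 0 1 with hγ
  set ν : Measure (ℝ × ℝ) := γ.prod γ with hν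
  have hmu3 : mu3 = γ.prod ν := rfl
  set S : Set (ℝ × ℝ × ℝ) :=
    {p : ℝ × ℝ × ℝ | τA ≤ α * p.1 + (1 - α) * p.2.1 + σZ * p.2.2} with hS_def
  have hS : MeasurableSet S := measurableSet_le measurable_const (by fun_prop)
  set c1 : ℝ := Real.sqrt (α^2 + (1-α)^2) with hc1_def
  have hc1 : 0 < c1 := Real.sqrt_pos.2 (by positivity)
  set K : ℝ := ∫ z, phi ((τA - σZ*z)/c1) ∂γ with hK_def
  -- K is positive
  have hKpos : 0 < K := by
    rw [hK_def, gauss_conv hc1 σZ τA]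
    have := phi_pos (τA / Real.sqrt (c1^2 + σZ^2))
    have h2 : 0 < Real.sqrt (c1^2 + σZ^2) := Real.sqrt_pos.2 (by positivity)
    positivity
  -- integrability of projections
  have h_fst_int : Integrable (fun p : ℝ × ℝ × ℝ => p.1) mu3 := by
    have hmap : mu3.map Prod.fst = γ := by
      rw [hmu3]
      simp [Measure.map_fst_prod]
    have h := integrable_id_gauss
    rw [← hγ, ← hmap] at h
    exact (integrable_map_measure aestronglyMeasurable_id measurable_fst.aemeasurable).1 h
  have h_snd_int : Integrable (fun p : ℝ × ℝ × ℝ => p.2.1) mu3 := by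
    have hmap : mu3.map (fun p : ℝ × ℝ × ℝ => p.2.1) = γ := by
      have heq : (fun p : ℝ × ℝ × ℝ => p.2.1) = Prod.fst ∘ Prod.snd := rfl
      rw [heq, ← Measure.map_map measurable_fst measurable_snd, hmu3]
      rw [Measure.map_snd_prod]
      simp [hν, Measure.map_fst_prod]
    have h := integrable_id_gauss
    rw [← hγ, ← hmap] at h
    exact (integrable_map_measure aestronglyMeasurable_id
      (measurable_fst.comp measurable_snd).aemeasurable).1 h
  have hq_fst_int : Integrable (fun q : ℝ × ℝ => q.1) ν := by
    have hmap : ν.map Prod.fst = γ := by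
      rw [hν]
      simp [Measure.map_fst_prod]
    have h := integrable_id_gauss
    rw [← hγ, ← hmap] at h
    exact (integrable_map_measure aestronglyMeasurable_id measurable_fst.aemeasurable).1 h
  -- Numerator
  have hN : (∫ p in S, p.1 ∂mu3) = (α / c1) * K := by
    rw [← integral_indicator hS]
    have hint1 : Integrable (S.indicator (fun p : ℝ × ℝ × ℝ => p.1)) mu3 :=
      h_fst_int.indicator hS
    rw [hmu3] at hint1 ⊢
    rw [integral_prod_symm _ hint1]
    have hinner : ∀ q : ℝ × ℝ,
        (∫ t, S.indicator (fun p : ℝ × ℝ × ℝ => p.1) (t, q) ∂γ)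
          = phi ((τA - (1-α)*q.1 - σZ*q.2)/α) := by
      intro q
      have hmem : ∀ t : ℝ, ((t, q) ∈ S) ↔ (τA - (1-α)*q.1 - σZ*q.2)/α ≤ t := by
        intro t
        simp only [hS_def, Set.mem_setOf_eq]
        rw [div_le_iff₀ hα0]
        constructor <;> intro h <;> nlinarith
      have hsec : (fun t => S.indicator (fun p : ℝ × ℝ × ℝ => p.1) (t, q))
          = (Ici ((τA - (1-α)*q.1 - σZ*q.2)/α)).indicator (id : ℝ → ℝ) := by
        ext t
        by_cases hm : (t, q) ∈ S
        · rw [Set.indicator_of_mem hm, Set.indicator_of_mem (mem_Ici.2 ((hmem t).1 hm))]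
          rfl
        · rw [Set.indicator_of_notMem hm, Set.indicator_of_notMem
            (fun h => hm ((hmem t).2 (mem_Ici.1 h)))]
      rw [show (∫ t, S.indicator (fun p : ℝ × ℝ × ℝ => p.1) (t, q) ∂γ)
          = ∫ t, (Ici ((τA - (1-α)*q.1 - σZ*q.2)/α)).indicator (id : ℝ → ℝ) t ∂γ from
          integral_congr_ae (ae_of_all _ fun t => congrFun hsec t)]
      exact gauss_indicator _
    rw [integral_congr_ae (ae_of_all _ hinner)]
    -- now integrate over ν
    have hφint : Integrable (fun q : ℝ × ℝ => phi ((τA - (1-α)*q.1 - σZ*q.2)/α)) ν := by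
      refine integrable_bdd ν ?_ ((Real.sqrt (2*π))⁻¹) (fun q => phi_le _)
      exact ((continuous_phi.comp (by fun_prop)).measurable).aestronglyMeasurable
    rw [hν] at hφint ⊢
    rw [integral_prod_symm _ hφint]
    have hinner2 : ∀ z : ℝ,
        (∫ s, phi ((τA - (1-α)*s - σZ*z)/α) ∂γ) = (α / c1) * phi ((τA - σZ*z)/c1) := by
      intro z
      have heq : ∀ s : ℝ, (τA - (1-α)*s - σZ*z)/α = ((τA - σZ*z) - (1-α)*s)/α := by
        intro s; ring_nf
      rw [integral_congr_ae (ae_of_all _ fun s => by rw [heq s])]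
      rw [hγ, gauss_conv hα0 (1-α) (τA - σZ*z), ← hc1_def]
    rw [integral_congr_ae (ae_of_all _ hinner2), integral_const_mul]
  -- Denominator
  have hD : (∫ p in S, p.2.1 ∂mu3) = ((1-α) / c1) * K := by
    rw [← integral_indicator hS]
    have hint2 : Integrable (S.indicator (fun p : ℝ × ℝ × ℝ => p.2.1)) mu3 :=
      h_snd_int.indicator hS
    rw [hmu3] at hint2 ⊢
    rw [integral_prod _ hint2]
    have hinner : ∀ t : ℝ,
        (∫ q, S.indicator (fun p : ℝ × ℝ × ℝ => p.2.1) (t, q) ∂ν)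
          = ∫ z, phi ((τA - α*t - σZ*z)/(1-α)) ∂γ := by
      intro t
      have hqint : Integrable (fun q : ℝ × ℝ =>
          S.indicator (fun p : ℝ × ℝ × ℝ => p.2.1) (t, q)) ν := by
        refine Integrable.mono' hq_fst_int.abs ?_ (ae_of_all _ fun q => ?_)
        · exact (((measurable_fst.comp measurable_snd).indicator hS).comp
            measurable_prodMk_left).aestronglyMeasurable
        · by_cases hm : (t, q) ∈ S
          · rw [Set.indicator_of_mem hm]
            exact le_abs_self _ |>.trans (by simp)
          · rw [Set.indicator_of_notMem hm]
            simp
      rw [hν] at hqint ⊢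
      rw [integral_prod_symm _ hqint]
      congr 1
      ext z
      have hmem : ∀ s : ℝ, ((t, (s, z)) ∈ S) ↔ (τA - α*t - σZ*z)/(1-α) ≤ s := by
        intro s
        simp only [hS_def, Set.mem_setOf_eq]
        rw [div_le_iff₀ h1α]
        constructor <;> intro h <;> nlinarith
      have hsec : (fun s => S.indicator (fun p : ℝ × ℝ × ℝ => p.2.1) (t, (s, z)))
          = (Ici ((τA - α*t - σZ*z)/(1-α))).indicator (id : ℝ → ℝ) := by
        ext s
        by_cases hm : (t, (s, z)) ∈ S
        · rw [Set.indicator_of_mem hm, Set.indicator_of_mem (mem_Ici.2 ((hmem s).1 hm))]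
          rfl
        · rw [Set.indicator_of_notMem hm, Set.indicator_of_notMem
            (fun h => hm ((hmem s).2 (mem_Ici.1 h)))]
      rw [show (∫ s, S.indicator (fun p : ℝ × ℝ × ℝ => p.2.1) (t, (s, z)) ∂γ)
          = ∫ s, (Ici ((τA - α*t - σZ*z)/(1-α))).indicator (id : ℝ → ℝ) s ∂γ from
          integral_congr_ae (ae_of_all _ fun s => congrFun hsec s)]
      exact gauss_indicator _
    rw [integral_congr_ae (ae_of_all _ hinner)]
    -- swap order of integration
    have hFint : Integrable (fun r : ℝ × ℝ => phi ((τA - α*r.1 - σZ*r.2)/(1-α))) (γ.prod γ) := by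
      refine integrable_bdd _ ?_ ((Real.sqrt (2*π))⁻¹) (fun r => phi_le _)
      exact ((continuous_phi.comp (by fun_prop)).measurable).aestronglyMeasurable
    rw [← integral_prod _ hFint, integral_prod_symm _ hFint]
    have hinner2 : ∀ z : ℝ,
        (∫ t, phi ((τA - α*t - σZ*z)/(1-α)) ∂γ) = ((1-α) / c1) * phi ((τA - σZ*z)/c1) := by
      intro z
      have heq : ∀ t : ℝ, (τA - α*t - σZ*z)/(1-α) = ((τA - σZ*z) - α*t)/(1-α) := by
        intro t; ring_nf
      rw [integral_congr_ae (ae_of_all _ fun t => by rw [heq t])]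
      rw [hγ, gauss_conv h1α α (τA - σZ*z)]
      rw [show (1-α)^2 + α^2 = α^2 + (1-α)^2 from by ring, ← hc1_def]
    rw [integral_congr_ae (ae_of_all _ hinner2), integral_const_mul]
  rw [hN, hD]
  rw [mul_comm (α/c1) K, mul_comm ((1-α)/c1) K, mul_div_mul_left _ _ hKpos.ne']
  field_simp
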